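/- Let R be a commutative ring and (a,b,c) a regular sequence in R. Consider the Koszul matrix factorizations {bc,a} and {ca,b} of the element W = abc. Then the 2-periodic Hom-complex Hom({bc,a},{ca,b}) has cohomology isomorphic to R/(a,b) concentrated in odd degree. -/

import Mathlib

/-!
For Koszul matrix factorizations `E = {uE, vE}` and `F = {uF, vF}` of `W = uE·vE = uF·vF`
(where `{u,v}` is the rank-one matrix factorization `R →^v R →^u R`), the internal Hom
`Hom(E,F)` is the 2-periodic complex (matrix factorization of `0`) with
`Hom₀ = E₀^*⊗F₀ ⊕ E₁^*⊗F₁ ≅ R²`, `Hom₁ = E₀^*⊗F₁ ⊕ E₁^*⊗F₀ ≅ R²`, and differentials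
`Dev(s,t) = (uF·s − uE·t, vF·t − vE·s)` (even → odd) and
`Dodd(g₀,g₁) = (vF·g₀ + uE·g₁, uF·g₁ + vE·g₀)` (odd → even).
Its cohomology is `Heven = ker Dev / im Dodd` and `Hodd = ker Dodd / im Dev`.
-/

variable {R : Type} [CommRing R]

/-- The even-to-odd differential of `Hom({uE,vE},{uF,vF})`. -/
def Dev (uE vE uF vF : R) : (R × R) →ₗ[R] (R × R) where
  toFun p := (uF * p.1 - uE * p.2, vF * p.2 - vE * p.1)
  map_add' p q := by
    refine Prod.ext ?_ ?_ <;> simp only [Prod.fst_add, Prod.snd_add] <;> ring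
  map_smul' c p := by
    refine Prod.ext ?_ ?_ <;>
      simp only [Prod.smul_fst, Prod.smul_snd, smul_eq_mul, RingHom.id_apply] <;> ring

/-- The odd-to-even differential of `Hom({uE,vE},{uF,vF})`. -/
def Dodd (uE vE uF vF : R) : (R × R) →ₗ[R] (R × R) where
  toFun p := (vF * p.1 + uE * p.2, uF * p.2 + vE * p.1)
  map_add' p q := by
    refine Prod.ext ?_ ?_ <;> simp only [Prod.fst_add, Prod.snd_add] <;> ring
  map_smul' c p := by
    refine Prod.ext ?_ ?_ <;>
      simp only [Prod.smul_fst, Prod.smul_snd, smul_eq_mul, RingHom.id_apply] <;> ring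

/-- Even cohomology of the 2-periodic complex `Hom({uE,vE},{uF,vF})`. -/
abbrev HomEven (uE vE uF vF : R) :=
  LinearMap.ker (Dev uE vE uF vF) ⧸
    Submodule.comap (LinearMap.ker (Dev uE vE uF vF)).subtype
      (LinearMap.range (Dodd uE vE uF vF))

/-- Odd cohomology of the 2-periodic complex `Hom({uE,vE},{uF,vF})`. -/
abbrev HomOdd (uE vE uF vF : R) :=
  LinearMap.ker (Dodd uE vE uF vF) ⧸
    Submodule.comap (LinearMap.ker (Dodd uE vE uF vF)).subtype
      (LinearMap.range (Dev uE vE uF vF))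

/-!
STATEMENT 8: Let `(a,b,c)` be a regular sequence in a commutative ring `R`, and consider
the Koszul matrix factorizations `{bc,a}` and `{ca,b}` of `W = abc`.  Then the 2-periodic
complex `Hom({bc,a},{ca,b})` has cohomology isomorphic to `R/(a,b)` concentrated in odd
degree.  (Here `{u,v}` has `uE = u`, `vE = v`.)
-/
theorem stmt_8 (R : Type) [CommRing R] (a b c : R)
    (hreg : RingTheory.Sequence.IsRegular R [a, b, c]) :
    Subsingleton (HomEven (b * c) a (c * a) b) ∧
    Nonempty ((HomOdd (b * c) a (c * a) b) ≃ₗ[R] (R ⧸ Ideal.span {a, b})) := by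

  -- Extract regularity facts
  have hw := hreg.toIsWeaklyRegular
  rw [RingTheory.Sequence.isWeaklyRegular_cons_iff] at hw
  obtain ⟨ha, hw⟩ := hw
  rw [RingTheory.Sequence.isWeaklyRegular_cons_iff] at hw
  obtain ⟨hb, -⟩ := hw
  have ha' : ∀ x : R, a * x = 0 → x = 0 := by
    intro x hx
    have := ha (a₁ := x) (a₂ := 0) (by simpa [smul_eq_mul] using hx)
    exact this
  have hb' : ∀ t : R, (∃ y, b * t = a * y) → ∃ y, t = a * y := by
    intro t ⟨y, hy⟩
    have h0 : (Submodule.Quotient.mk (b * t) : QuotSMulTop a R) = 0 := by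
      rw [Submodule.Quotient.mk_eq_zero]
      exact ⟨y, Submodule.mem_top, by simpa [smul_eq_mul, mul_comm] using hy.symm⟩
    have : (Submodule.Quotient.mk t : QuotSMulTop a R) = 0 := by
      apply hb
      have h1 : b • (Submodule.Quotient.mk t : QuotSMulTop a R) = 0 := by
        rw [← Submodule.Quotient.mk_smul, smul_eq_mul]; exact h0
      simpa using h1
    rw [Submodule.Quotient.mk_eq_zero] at this
    obtain ⟨y, -, hy2⟩ := this
    exact ⟨y, by simpa [smul_eq_mul, eq_comm, mul_comm] using hy2⟩
  constructor
  · -- Even cohomology vanishes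
    rw [Submodule.Quotient.subsingleton_iff, Submodule.eq_top_iff']
    rintro ⟨⟨s, t⟩, hst⟩
    simp only [LinearMap.mem_ker, Dev, LinearMap.coe_mk, AddHom.coe_mk, Prod.mk.injEq,
      Prod.ext_iff, Prod.fst_zero, Prod.snd_zero] at hst
    obtain ⟨-, h2⟩ := hst
    have hst' : a * s = b * t := by linear_combination -h2
    -- t ∈ (a), via regularity of b mod a
    obtain ⟨h, hh⟩ := hb' t ⟨s, hst'.symm⟩
    have hs : s = b * h := by
      apply sub_eq_zero.mp
      apply ha'
      rw [mul_sub, hst', hh]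
      ring
    refine ⟨(h, 0), ?_⟩
    simp only [Dodd, LinearMap.coe_mk, AddHom.coe_mk]
    refine Prod.ext ?_ ?_ <;> simp [hs, hh]
  · -- Odd cohomology is R/(a,b)
    set N := Submodule.comap (LinearMap.ker (Dodd (b * c) a (c * a) b)).subtype
      (LinearMap.range (Dev (b * c) a (c * a) b)) with hN
    let f : (LinearMap.ker (Dodd (b * c) a (c * a) b)) →ₗ[R] (R ⧸ Ideal.span {a, b}) :=
      (Ideal.span {a, b}).mkQ ∘ₗ (LinearMap.snd R R R) ∘ₗ
        (LinearMap.ker (Dodd (b * c) a (c * a) b)).subtype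
    have hker : ∀ p : R × R, p ∈ LinearMap.ker (Dodd (b * c) a (c * a) b) ↔
        p.1 = -(c * p.2) := by
      intro p
      simp only [LinearMap.mem_ker, Dodd, LinearMap.coe_mk, AddHom.coe_mk, Prod.ext_iff,
        Prod.fst_zero, Prod.snd_zero]
      constructor
      · rintro ⟨h1, h2⟩
        have : a * (p.1 + c * p.2) = 0 := by linear_combination h2
        have := ha' _ this
        linear_combination this
      · intro h
        constructor <;> rw [h] <;> ring
    have hsurj : Function.Surjective f := by
      intro x
      obtain ⟨y, rfl⟩ := Submodule.mkQ_surjective _ x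
      exact ⟨⟨(-(c * y), y), (hker _).mpr rfl⟩, rfl⟩
    have hkf : N = LinearMap.ker f := by
      ext ⟨⟨p1, p2⟩, hp⟩
      have hp1 : p1 = -(c * p2) := (hker _).mp hp
      simp only [hN, Submodule.mem_comap, LinearMap.mem_range, LinearMap.mem_ker, f,
        LinearMap.comp_apply, Submodule.coe_subtype, LinearMap.snd_apply,
        Submodule.mkQ_apply, Submodule.Quotient.mk_eq_zero]
      constructor
      · rintro ⟨⟨s, t⟩, hst⟩
        simp only [Dev, LinearMap.coe_mk, AddHom.coe_mk, Prod.ext_iff] at hst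
        rw [Ideal.mem_span_pair]
        exact ⟨-s, t, by linear_combination hst.2⟩
      · intro hmem
        rw [show ({a, b} : Set R) = {a, b} from rfl] at hmem
        obtain ⟨u, v, huv⟩ := Ideal.mem_span_pair.mp hmem
        refine ⟨(-u, v), ?_⟩
        simp only [Dev, LinearMap.coe_mk, AddHom.coe_mk]
        refine Prod.ext ?_ ?_
        · show c * a * (-u) - b * c * v = p1
          rw [hp1, ← huv]; ring
        · show b * v - a * (-u) = p2
          rw [← huv]; ring
    refine ⟨(Submodule.quotEquivOfEq _ _ hkf).trans (f.quotKerEquivOfSurjective hsurj)⟩
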